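/- arXiv:2306.05875 — 11 statements merged into one kernel-verified Lean document; each statement's English description precedes it below -/
import Mathlib

section
/- If σ_A² ≤ σ_B², then for every ω ∈ [0,1) one has P_A ⪯ P_SCI(ω), i.e. P_SCI(ω) − P_A is positive semidefinite. (Consequently, no SCI filter can improve the estimator of agent A when agent B's variance in the measurement direction is at least that of A.) -/
open Matrix

lemma dot_vecMulVec {n : ℕ} (a b x : Fin n → ℝ) :
    x ⬝ᵥ ((vecMulVec a b) *ᵥ x) = (x ⬝ᵥ a) * (b ⬝ᵥ x) := by
  simp only [mulVec, vecMulVec_apply, dotProduct, Finset.sum_mul, Finset.mul_sum]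
  rw [Finset.sum_comm]
  apply Finset.sum_congr rfl
  intro i _
  apply Finset.sum_congr rfl
  intro j _
  ring

lemma herm_vecMulVec {n : ℕ} (a : Fin n → ℝ) : (vecMulVec a a).IsHermitian := by
  ext i j
  simp [conjTranspose_apply, vecMulVec_apply, mul_comm]

/-- If `σ_A² ≤ σ_B²`, then for every `ω ∈ [0,1)` one has `P_A ⪯ P_SCI(ω)`
(Loewner order), hence no SCI filter can improve the estimator of agent `A`. -/
theorem stmt_0 {n : ℕ} (hn : 1 ≤ n)
    (PA PB : Matrix (Fin n) (Fin n) ℝ)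
    (hPA : PA.PosDef) (hPAs : PA.IsSymm) (hPB : PB.PosDef) (hPBs : PB.IsSymm)
    (u : Fin n → ℝ) (hu : u ⬝ᵥ u = 1)
    (σm2 : ℝ) (hσm : 0 ≤ σm2)
    (σA2 σB2 : ℝ) (hσA : σA2 = u ⬝ᵥ (PA *ᵥ u)) (hσB : σB2 = u ⬝ᵥ (PB *ᵥ u))
    (D : ℝ → ℝ) (hD : ∀ ω, D ω = ω * σA2 + (1 - ω) * (σB2 + ω * σm2))
    (PSCI : ℝ → Matrix (Fin n) (Fin n) ℝ)
    (hPSCI : ∀ ω, PSCI ω =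
      (1 / (1 - ω)) • (PA - (ω / D ω) • vecMulVec (PA *ᵥ u) (PA *ᵥ u)))
    (hAB : σA2 ≤ σB2) :
    ∀ ω ∈ Set.Ico (0 : ℝ) 1, (PSCI ω - PA).PosSemidef := by
  rintro ω ⟨hω0, hω1⟩
  have h1ω : (0:ℝ) < 1 - ω := by linarith
  have hune : u ≠ 0 := by
    intro h; rw [h] at hu; simp at hu
  have hσApos : 0 < σA2 := by
    have := (posDef_iff_dotProduct_mulVec.mp hPA).2 hune
    simpa [hσA] using this
  have hσBpos : 0 < σB2 := by
    have := (posDef_iff_dotProduct_mulVec.mp hPB).2 hune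
    simpa [hσB] using this
  have hDge : σA2 ≤ D ω := by
    rw [hD]
    nlinarith [mul_nonneg (mul_nonneg h1ω.le hω0) hσm,
      mul_nonneg h1ω.le (sub_nonneg.2 hAB)]
  have hDpos : 0 < D ω := lt_of_lt_of_le hσApos hDge
  refine posSemidef_iff_dotProduct_mulVec.mpr ⟨?_, ?_⟩
  · rw [hPSCI]
    show _ᴴ = _
    simp only [conjTranspose_smul, conjTranspose_sub, hPA.1.eq,
      (herm_vecMulVec (PA *ᵥ u)).eq, star_trivial]
  · intro x
    simp only [star_trivial]
    have hq : (0:ℝ) ≤ x ⬝ᵥ (PA *ᵥ x) := by simpa using hPA.posSemidef.dotProduct_mulVec_nonneg x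
    set q := x ⬝ᵥ (PA *ᵥ x) with hqdef
    set s := x ⬝ᵥ (PA *ᵥ u) with hsdef
    have hsym : ∀ y z : Fin n → ℝ, y ⬝ᵥ (PA *ᵥ z) = z ⬝ᵥ (PA *ᵥ y) := by
      intro y z
      rw [dotProduct_mulVec, dotProduct_comm, ← mulVec_transpose, hPAs.eq]
    have hCS : s * s ≤ σA2 * q := by
      have hquad : ∀ t : ℝ, 0 ≤ σA2 * (t * t) + (2 * s) * t + q := by
        intro t
        have h0 : (0:ℝ) ≤ (x + t • u) ⬝ᵥ (PA *ᵥ (x + t • u)) := by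
          simpa using hPA.posSemidef.dotProduct_mulVec_nonneg (x + t • u)
        have expand : (x + t • u) ⬝ᵥ (PA *ᵥ (x + t • u)) =
            σA2 * (t * t) + (2 * s) * t + q := by
          simp only [mulVec_add, mulVec_smul, dotProduct_add, add_dotProduct,
            dotProduct_smul, smul_dotProduct, smul_eq_mul]
          rw [hsym u x, hσA, ← hqdef, ← hsdef]
          ring
        linarith [expand ▸ h0]
      have := discrim_le_zero hquad
      rw [discrim] at this
      nlinarith
    have key : x ⬝ᵥ ((PSCI ω - PA) *ᵥ x) =
        (1 / (1 - ω)) * (q - (ω / D ω) * (s * s)) - q := by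
      rw [hPSCI]
      rw [sub_mulVec, dotProduct_sub, smul_mulVec, dotProduct_smul,
        sub_mulVec, dotProduct_sub, smul_mulVec, dotProduct_smul,
        dot_vecMulVec, dotProduct_comm (PA *ᵥ u) x, ← hsdef, ← hqdef]
      simp only [smul_eq_mul]
    rw [key]
    have e1 : (1 / (1 - ω)) * (q - (ω / D ω) * (s * s)) - q =
        (ω / ((1 - ω) * D ω)) * (D ω * q - s * s) := by
      field_simp
      ring
    rw [e1]
    apply mul_nonneg (div_nonneg hω0 (mul_nonneg h1ω.le hDpos.le))
    nlinarith [mul_le_mul_of_nonneg_right hDge hq]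
end

section
/- Let J be a real-valued function on n×n matrices that is monotone with respect to the Loewner order (M ⪯ N implies J(M) ≤ J(N)). If σ_A² ≤ σ_B², then for every ω ∈ [0,1) one has J(P_SCI(ω)) ≥ J(P_A); in particular there is no ω ∈ [0,1) with J(P_SCI(ω)) < J(P_A) (no pertinent SCI filter for agent A exists). -/
open Matrix


lemma aux_vmv {n : ℕ} (v x : Fin n → ℝ) :
    x ⬝ᵥ (vecMulVec v v *ᵥ x) = (v ⬝ᵥ x) * (v ⬝ᵥ x) := by
  simp [vecMulVec, mulVec, dotProduct, Finset.mul_sum, Finset.sum_mul, mul_assoc]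
  rw [Finset.sum_comm]
  congr 1; ext i; congr 1; ext j; ring

lemma aux_cs {n : ℕ} (PA : Matrix (Fin n) (Fin n) ℝ) (hPA : PA.PosDef)
    (hPAs : PA.IsSymm) (u x : Fin n → ℝ) :
    (x ⬝ᵥ (PA *ᵥ u)) * (x ⬝ᵥ (PA *ᵥ u)) ≤ (x ⬝ᵥ (PA *ᵥ x)) * (u ⬝ᵥ (PA *ᵥ u)) := by
  have hsym : u ⬝ᵥ (PA *ᵥ x) = x ⬝ᵥ (PA *ᵥ u) := by
    rw [dotProduct_mulVec, ← hPAs.eq, vecMul_transpose, hPAs.eq, dotProduct_comm]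
  have key : ∀ t : ℝ, 0 ≤ (u ⬝ᵥ (PA *ᵥ u)) * (t * t)
      + (2 * (x ⬝ᵥ (PA *ᵥ u))) * t + x ⬝ᵥ (PA *ᵥ x) := by
    intro t
    have h0 := hPA.posSemidef.dotProduct_mulVec_nonneg (x + t • u)
    simp only [star_trivial] at h0
    calc (0:ℝ) ≤ (x + t • u) ⬝ᵥ (PA *ᵥ (x + t • u)) := h0
    _ = (u ⬝ᵥ (PA *ᵥ u)) * (t * t) + (2 * (x ⬝ᵥ (PA *ᵥ u))) * t + x ⬝ᵥ (PA *ᵥ x) := by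
        rw [mulVec_add, mulVec_smul, add_dotProduct, smul_dotProduct, dotProduct_add,
          dotProduct_add]
        simp only [dotProduct_smul, smul_eq_mul]
        rw [hsym]; ring
  have h := discrim_le_zero key
  rw [discrim] at h
  nlinarith [h]

/-- If `J` is monotone w.r.t. the Loewner order and `σ_A² ≤ σ_B²`, then
`J (P_SCI ω) ≥ J P_A` for all `ω ∈ [0,1)`; in particular no pertinent SCI
filter for agent `A` exists. -/
theorem stmt_1 {n : ℕ} (hn : 1 ≤ n)
    (PA PB : Matrix (Fin n) (Fin n) ℝ)
    (hPA : PA.PosDef) (hPAs : PA.IsSymm) (hPB : PB.PosDef) (hPBs : PB.IsSymm)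
    (u : Fin n → ℝ) (hu : u ⬝ᵥ u = 1)
    (σm2 : ℝ)
    (σA2 σB2 : ℝ) (hσA : σA2 = u ⬝ᵥ (PA *ᵥ u)) (hσB : σB2 = u ⬝ᵥ (PB *ᵥ u))
    (D : ℝ → ℝ) (hD : ∀ ω, D ω = ω * σA2 + (1 - ω) * (σB2 + ω * σm2))
    (PSCI : ℝ → Matrix (Fin n) (Fin n) ℝ)
    (hPSCI : ∀ ω, PSCI ω =
      (1 / (1 - ω)) • (PA - (ω / D ω) • vecMulVec (PA *ᵥ u) (PA *ᵥ u)))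
    (hσm : 0 ≤ σm2)
    (J : Matrix (Fin n) (Fin n) ℝ → ℝ)
    (hJ : ∀ M N : Matrix (Fin n) (Fin n) ℝ, (N - M).PosSemidef → J M ≤ J N)
    (hAB : σA2 ≤ σB2) :
    (∀ ω ∈ Set.Ico (0 : ℝ) 1, J PA ≤ J (PSCI ω)) ∧
      ¬ ∃ ω ∈ Set.Ico (0 : ℝ) 1, J (PSCI ω) < J PA := by
  -- basic positivity facts
  have hune : u ≠ 0 := by
    intro h; rw [h] at hu; simp at hu
  have hσA0 : 0 < σA2 := by rw [hσA]; simpa [star_trivial] using hPA.dotProduct_mulVec_pos hune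
  have hσB0 : 0 < σB2 := by rw [hσB]; simpa [star_trivial] using hPB.dotProduct_mulVec_pos hune
  have main : ∀ ω ∈ Set.Ico (0 : ℝ) 1, J PA ≤ J (PSCI ω) := by
    intro ω hω
    obtain ⟨hω0, hω1⟩ := hω
    have h1ω : 0 < 1 - ω := by linarith
    have hDge : σA2 ≤ D ω := by
      rw [hD]
      nlinarith [mul_nonneg h1ω.le (sub_nonneg.2 hAB), mul_nonneg (mul_nonneg h1ω.le hω0) hσm]
    have hD0 : 0 < D ω := lt_of_lt_of_le hσA0 hDge
    apply hJ
    refine .of_dotProduct_mulVec_nonneg ?_ ?_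
    · -- Hermitian
      rw [hPSCI, Matrix.IsHermitian, conjTranspose_eq_transpose_of_trivial]
      ext i j
      simp only [transpose_apply, Matrix.sub_apply, Matrix.smul_apply, vecMulVec_apply, smul_eq_mul]
      rw [hPAs.apply i j]
      ring
    · intro x
      simp only [star_trivial]
      rw [hPSCI, sub_mulVec, smul_mulVec, sub_mulVec, smul_mulVec,
        dotProduct_sub, dotProduct_smul, dotProduct_sub, dotProduct_smul, aux_vmv]
      set q := x ⬝ᵥ (PA *ᵥ x) with hq
      set p := (PA *ᵥ u) ⬝ᵥ x with hp
      have hq0 : 0 ≤ q := by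
        simpa [star_trivial] using hPA.posSemidef.dotProduct_mulVec_nonneg x
      have hcs : p * p ≤ q * σA2 := by
        rw [hσA, hp, dotProduct_comm]
        exact aux_cs PA hPA hPAs u x
      have hpq : p * p ≤ q * D ω := by
        calc p * p ≤ q * σA2 := hcs
        _ ≤ q * D ω := by nlinarith
      have key : (1 / (1 - ω)) * (q - (ω / D ω) * (p * p)) - q
          = (ω / ((1 - ω) * D ω)) * (q * D ω - p * p) := by
        field_simp
        ring
      simp only [smul_eq_mul, key]
      apply mul_nonneg
      · positivity
      · linarith
  refine ⟨main, ?_⟩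
  rintro ⟨ω, hω, hlt⟩
  exact absurd (main ω hω) (not_le.mpr hlt)
end

section
/- Let J be a real-valued function on n×n matrices that is monotone with respect to the Loewner order (M ⪯ N implies J(M) ≤ J(N)). If there exists ω ∈ [0,1) with J(P_SCI^A(ω)) < J(P_A) (a pertinent SCI filter for agent A), then there is no ω′ ∈ [0,1) with J(P_SCI^B(ω′)) < J(P_B); i.e., at most one of the two agents can benefit from the distance measurement. -/
open Matrix

lemma vecMulVec_mulVec' {n : ℕ} (v w x : Fin n → ℝ) :
    vecMulVec v w *ᵥ x = (w ⬝ᵥ x) • v := by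
  ext i
  simp [vecMulVec, mulVec, dotProduct, Finset.mul_sum, mul_assoc, mul_comm, mul_left_comm]

lemma cs {n : ℕ} {P : Matrix (Fin n) (Fin n) ℝ} (hP : P.PosSemidef)
    (x u : Fin n → ℝ) :
    (x ⬝ᵥ (P *ᵥ u)) ^ 2 ≤ (x ⬝ᵥ (P *ᵥ x)) * (u ⬝ᵥ (P *ᵥ u)) := by
  have h : ∀ t : ℝ, 0 ≤ (u ⬝ᵥ (P *ᵥ u)) * (t * t) + (2 * (x ⬝ᵥ (P *ᵥ u))) * t
      + x ⬝ᵥ (P *ᵥ x) := by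
    intro t
    have h0 := hP.dotProduct_mulVec_nonneg (x + t • u)
    have hsym : u ⬝ᵥ (P *ᵥ x) = x ⬝ᵥ (P *ᵥ u) := by
      have hPt : Pᵀ = P := by
        simpa [conjTranspose_eq_transpose_of_trivial] using hP.1.eq
      rw [dotProduct_mulVec, ← mulVec_transpose, hPt, dotProduct_comm]
    simp only [star_trivial, mulVec_add, mulVec_smul, dotProduct_add, add_dotProduct,
      dotProduct_smul, smul_dotProduct, smul_eq_mul] at h0
    rw [hsym] at h0
    nlinarith [h0]
  have := discrim_le_zero h
  rw [discrim] at this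
  nlinarith

lemma sci_psd {n : ℕ} {P : Matrix (Fin n) (Fin n) ℝ} (hP : P.PosSemidef)
    (u : Fin n → ℝ) {D ω : ℝ} (hω0 : 0 ≤ ω) (hω1 : ω < 1)
    (hD : 0 < D) (hσ : u ⬝ᵥ (P *ᵥ u) ≤ D) :
    ((1 / (1 - ω)) • (P - (ω / D) • vecMulVec (P *ᵥ u) (P *ᵥ u)) - P).PosSemidef := by
  have hPt : Pᵀ = P := by
    simpa [conjTranspose_eq_transpose_of_trivial] using hP.1.eq
  refine PosSemidef.of_dotProduct_mulVec_nonneg ?_ ?_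
  · have hsymP : ∀ i j, P j i = P i j := by
      intro i j
      conv_lhs => rw [← hPt]
      rfl
    ext i j
    simp only [conjTranspose_apply, star_trivial, Matrix.smul_apply, Matrix.sub_apply, vecMulVec_apply,
      smul_eq_mul]
    rw [hsymP]
    ring
  · intro x
    simp only [star_trivial, sub_mulVec, smul_mulVec, dotProduct_sub, dotProduct_smul,
      vecMulVec_mulVec', smul_eq_mul]
    set a := x ⬝ᵥ (P *ᵥ x) with ha
    set b := x ⬝ᵥ (P *ᵥ u) with hb
    have hb' : (P *ᵥ u) ⬝ᵥ x = b := dotProduct_comm _ _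
    rw [hb']
    have hcs : b ^ 2 ≤ a * (u ⬝ᵥ (P *ᵥ u)) := cs hP x u
    have ha0 : 0 ≤ a := by simpa using hP.dotProduct_mulVec_nonneg x
    have h1 : b ^ 2 ≤ a * D := le_trans hcs (by nlinarith)
    have h2 : (0:ℝ) < 1 - ω := by linarith
    have key : (0:ℝ) ≤ (ω / ((1 - ω) * D)) * (a * D - b * b) := by
      apply mul_nonneg (div_nonneg hω0 (mul_pos h2 hD).le)
      nlinarith
    have heq : 1 / (1 - ω) * (a - ω / D * (b * b)) - a
        = (ω / ((1 - ω) * D)) * (a * D - b * b) := by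
      field_simp
      ring
    rw [heq]
    exact key

/-- At most one of the two agents can benefit from the distance measurement:
if there is a pertinent SCI filter for agent `A` (w.r.t. a Loewner-monotone
cost `J`), then there is none for agent `B`. -/
theorem stmt_2 {n : ℕ} (hn : 1 ≤ n)
    (PA PB : Matrix (Fin n) (Fin n) ℝ)
    (hPA : PA.PosDef) (hPAs : PA.IsSymm) (hPB : PB.PosDef) (hPBs : PB.IsSymm)
    (u : Fin n → ℝ) (hu : u ⬝ᵥ u = 1)
    (σm2 : ℝ) (hσm : 0 ≤ σm2)
    (σA2 σB2 : ℝ) (hσA : σA2 = u ⬝ᵥ (PA *ᵥ u)) (hσB : σB2 = u ⬝ᵥ (PB *ᵥ u))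
    (DA DB : ℝ → ℝ)
    (hDA : ∀ ω, DA ω = ω * σA2 + (1 - ω) * (σB2 + ω * σm2))
    (hDB : ∀ ω, DB ω = ω * σB2 + (1 - ω) * (σA2 + ω * σm2))
    (PSCIA PSCIB : ℝ → Matrix (Fin n) (Fin n) ℝ)
    (hPSCIA : ∀ ω, PSCIA ω =
      (1 / (1 - ω)) • (PA - (ω / DA ω) • vecMulVec (PA *ᵥ u) (PA *ᵥ u)))
    (hPSCIB : ∀ ω, PSCIB ω =
      (1 / (1 - ω)) • (PB - (ω / DB ω) • vecMulVec (PB *ᵥ u) (PB *ᵥ u)))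
    (J : Matrix (Fin n) (Fin n) ℝ → ℝ)
    (hJ : ∀ M N : Matrix (Fin n) (Fin n) ℝ, (N - M).PosSemidef → J M ≤ J N)
    (hA : ∃ ω ∈ Set.Ico (0 : ℝ) 1, J (PSCIA ω) < J PA) :
    ¬ ∃ ω' ∈ Set.Ico (0 : ℝ) 1, J (PSCIB ω') < J PB := by
  obtain ⟨ω, ⟨hω0, hω1⟩, hJA⟩ := hA
  have hune : u ≠ 0 := by
    intro h
    rw [h] at hu
    simp at hu
  have hσA0 : 0 < σA2 := by
    rw [hσA]
    simpa using hPA.dotProduct_mulVec_pos hune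
  have hσB0 : 0 < σB2 := by
    rw [hσB]
    simpa using hPB.dotProduct_mulVec_pos hune
  -- From pertinence for A, deduce σA2 > σB2 + ω * σm2
  have hkey : σB2 + ω * σm2 < σA2 := by
    by_contra hcon
    push_neg at hcon
    have hDA0 : 0 < DA ω := by
      rw [hDA]
      nlinarith
    have hle : u ⬝ᵥ (PA *ᵥ u) ≤ DA ω := by
      rw [← hσA, hDA]
      nlinarith
    have hpsd := sci_psd hPA.posSemidef u hω0 hω1 hDA0 hle
    rw [← hPSCIA] at hpsd
    exact absurd (hJ PA (PSCIA ω) hpsd) (not_le.mpr hJA)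
  rintro ⟨ω', ⟨hω'0, hω'1⟩, hJB⟩
  have hAB : σB2 < σA2 := by nlinarith [mul_nonneg hω0 hσm]
  have h1 : (0:ℝ) ≤ (1 - ω') * ω' * σm2 :=
    mul_nonneg (mul_nonneg (by linarith) hω'0) hσm
  have h2 : (0:ℝ) ≤ (1 - ω') * (σA2 - σB2) :=
    mul_nonneg (by linarith) (by linarith)
  have hDB0 : 0 < DB ω' := by
    rw [hDB]
    nlinarith
  have hle : u ⬝ᵥ (PB *ᵥ u) ≤ DB ω' := by
    rw [← hσB, hDB]
    nlinarith
  have hpsd := sci_psd hPB.posSemidef u hω'0 hω'1 hDB0 hle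
  rw [← hPSCIB] at hpsd
  exact absurd (hJ PB (PSCIB ω') hpsd) (not_le.mpr hJB)
end

section
/- Let P be a symmetric positive definite n×n real matrix and u ∈ ℝⁿ with ‖u‖ = 1. Then 0 < ‖P u‖² ≤ (uᵀ P u) · tr(P); equivalently, the ratio r = ‖P u‖² / ((uᵀ P u) · tr(P)) satisfies 0 < r ≤ 1. -/
open Matrix

lemma aux_cs_s6 {n : ℕ} (A : Matrix (Fin n) (Fin n) ℝ) (y : Fin n → ℝ) :
    (A *ᵥ y) ⬝ᵥ (A *ᵥ y) ≤ (∑ i, ∑ j, A i j ^ 2) * (y ⬝ᵥ y) := by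
  have h : ∀ i, (∑ j, A i j * y j) * (∑ j, A i j * y j)
      ≤ (∑ j, A i j ^ 2) * (∑ j, y j * y j) := fun i => by
    calc (∑ j, A i j * y j) * (∑ j, A i j * y j) = (∑ j, A i j * y j) ^ 2 := (sq _).symm
      _ ≤ (∑ j, A i j ^ 2) * ∑ j, y j ^ 2 :=
          Finset.sum_mul_sq_le_sq_mul_sq Finset.univ (fun j => A i j) y
      _ = (∑ j, A i j ^ 2) * ∑ j, y j * y j := by simp [sq]
  calc (A *ᵥ y) ⬝ᵥ (A *ᵥ y) = ∑ i, (∑ j, A i j * y j) * (∑ j, A i j * y j) := by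
        simp [dotProduct, mulVec]
    _ ≤ ∑ i, (∑ j, A i j ^ 2) * (∑ j, y j * y j) := Finset.sum_le_sum fun i _ => h i
    _ = (∑ i, ∑ j, A i j ^ 2) * (y ⬝ᵥ y) := by rw [← Finset.sum_mul]; rfl

/-- For a symmetric positive definite matrix `P` and a unit vector `u`,
`0 < ‖P u‖² ≤ (uᵀ P u) · tr P`; i.e. the ratio
`r = ‖P u‖² / ((uᵀ P u) · tr P)` satisfies `0 < r ≤ 1`. -/
theorem stmt_6 {n : ℕ} (P : Matrix (Fin n) (Fin n) ℝ)
    (hP : P.PosDef) (hPs : P.IsSymm)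
    (u : Fin n → ℝ) (hu : u ⬝ᵥ u = 1) :
    (0 < (P *ᵥ u) ⬝ᵥ (P *ᵥ u) ∧
        (P *ᵥ u) ⬝ᵥ (P *ᵥ u) ≤ (u ⬝ᵥ (P *ᵥ u)) * P.trace) ∧
      (0 < (P *ᵥ u) ⬝ᵥ (P *ᵥ u) / ((u ⬝ᵥ (P *ᵥ u)) * P.trace) ∧
        (P *ᵥ u) ⬝ᵥ (P *ᵥ u) / ((u ⬝ᵥ (P *ᵥ u)) * P.trace) ≤ 1) := by
  have hu0 : u ≠ 0 := by rintro rfl; simp at hu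
  have hquad : 0 < u ⬝ᵥ (P *ᵥ u) := by simpa using hP.dotProduct_mulVec_pos hu0
  have hPu0 : P *ᵥ u ≠ 0 := by
    intro h; rw [h] at hquad; simp at hquad
  have hPuPu : 0 < (P *ᵥ u) ⬝ᵥ (P *ᵥ u) := by
    simpa using dotProduct_self_star_pos_iff.mpr hPu0
  -- trace is positive
  have hne : Nonempty (Fin n) := by
    obtain ⟨i, _⟩ := Function.ne_iff.mp hu0
    exact ⟨i⟩
  have htrpos : 0 < P.trace := by
    rw [Matrix.trace]
    refine Finset.sum_pos (fun i _ => ?_) Finset.univ_nonempty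
    have h := hP.dotProduct_mulVec_pos (x := Pi.single i 1) (by simp [Function.ne_iff])
    have : (star (Pi.single i 1) : Fin n → ℝ) ⬝ᵥ (P *ᵥ Pi.single i 1) = P i i := by
      simp [dotProduct, mulVec, Pi.single_apply, Finset.sum_ite_eq, mul_comm]
    rwa [this] at h
  -- square root
  set C := (open scoped MatrixOrder in CFC.sqrt P) with hCdef
  have hCC : C * C = P := by
    open scoped MatrixOrder in exact CFC.sqrt_mul_sqrt_self P hP.posSemidef.nonneg
  have hCs : Cᵀ = C := by
    have h := (open scoped MatrixOrder in (CFC.sqrt_nonneg P).posSemidef).1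
    rwa [Matrix.IsHermitian, conjTranspose_eq_transpose_of_trivial] at h
  have htr : (∑ i, ∑ j, C i j ^ 2) = P.trace := by
    rw [← hCC, Matrix.trace]
    simp only [Matrix.diag, Matrix.mul_apply]
    refine Finset.sum_congr rfl fun i _ => Finset.sum_congr rfl fun j _ => ?_
    have hsym : C j i = C i j := by rw [← Matrix.transpose_apply C i j, hCs]
    rw [hsym, sq]
  have hyy : (C *ᵥ u) ⬝ᵥ (C *ᵥ u) = u ⬝ᵥ (P *ᵥ u) := by
    rw [dotProduct_mulVec, ← mulVec_transpose, hCs, mulVec_mulVec, hCC,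
      dotProduct_comm]
  have hkey : (P *ᵥ u) ⬝ᵥ (P *ᵥ u) ≤ (u ⬝ᵥ (P *ᵥ u)) * P.trace := by
    have h1 : P *ᵥ u = C *ᵥ (C *ᵥ u) := by rw [mulVec_mulVec, hCC]
    calc (P *ᵥ u) ⬝ᵥ (P *ᵥ u) = (C *ᵥ (C *ᵥ u)) ⬝ᵥ (C *ᵥ (C *ᵥ u)) := by rw [h1]
      _ ≤ (∑ i, ∑ j, C i j ^ 2) * ((C *ᵥ u) ⬝ᵥ (C *ᵥ u)) := aux_cs_s6 C (C *ᵥ u)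
      _ = (u ⬝ᵥ (P *ᵥ u)) * P.trace := by rw [htr, hyy, mul_comm]
  have hden : 0 < (u ⬝ᵥ (P *ᵥ u)) * P.trace := mul_pos hquad htrpos
  exact ⟨⟨hPuPu, hkey⟩, div_pos hPuPu hden, (div_le_one hden).mpr hkey⟩
end

section
/- For every ω ∈ [0,1), the matrix P_SCI(ω) is symmetric positive definite (in particular D(ω) > 0). -/
open Matrix

/-- For every `ω ∈ [0,1)`, the SCI covariance `P_SCI(ω)` is symmetric
positive definite (in particular `D ω > 0`). -/
theorem stmt_7 {n : ℕ} (hn : 1 ≤ n)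
    (PA PB : Matrix (Fin n) (Fin n) ℝ)
    (hPA : PA.PosDef) (hPAs : PA.IsSymm) (hPB : PB.PosDef) (hPBs : PB.IsSymm)
    (u : Fin n → ℝ) (hu : u ⬝ᵥ u = 1)
    (σm2 : ℝ)
    (σA2 σB2 : ℝ) (hσA : σA2 = u ⬝ᵥ (PA *ᵥ u)) (hσB : σB2 = u ⬝ᵥ (PB *ᵥ u))
    (D : ℝ → ℝ) (hD : ∀ ω, D ω = ω * σA2 + (1 - ω) * (σB2 + ω * σm2))
    (PSCI : ℝ → Matrix (Fin n) (Fin n) ℝ)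
    (hPSCI : ∀ ω, PSCI ω =
      (1 / (1 - ω)) • (PA - (ω / D ω) • vecMulVec (PA *ᵥ u) (PA *ᵥ u)))
    (hσm : 0 ≤ σm2) :
    ∀ ω ∈ Set.Ico (0 : ℝ) 1,
      0 < D ω ∧ (PSCI ω).IsSymm ∧ (PSCI ω).PosDef := by
  intro ω hω
  obtain ⟨hω0, hω1⟩ := hω
  have h1ω : 0 < 1 - ω := by linarith
  have hu0 : u ≠ 0 := by
    intro h; rw [h] at hu; simp at hu
  have hσA2 : 0 < σA2 := by rw [hσA]; simpa using hPA.dotProduct_mulVec_pos hu0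
  have hσB2 : 0 < σB2 := by rw [hσB]; simpa using hPB.dotProduct_mulVec_pos hu0
  have hDpos : 0 < D ω := by
    rw [hD]
    have : 0 ≤ ω * σm2 := mul_nonneg hω0 hσm
    nlinarith
  have hDω : ω * σA2 < D ω := by
    rw [hD]
    have : 0 ≤ ω * σm2 := mul_nonneg hω0 hσm
    nlinarith
  set v : Fin n → ℝ := PA *ᵥ u with hv
  -- symmetry
  have hsymm : (PSCI ω).IsSymm := by
    rw [hPSCI ω]
    unfold Matrix.IsSymm
    rw [transpose_smul, transpose_sub, transpose_smul, hPAs]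
    congr 1
    congr 1
    congr 1
    ext i j
    simp [vecMulVec_apply, mul_comm]
  -- quadratic form computation
  have hmv : ∀ x : Fin n → ℝ, (vecMulVec v v) *ᵥ x = (v ⬝ᵥ x) • v := by
    intro x
    ext i
    simp only [mulVec, dotProduct, vecMulVec_apply, Pi.smul_apply, smul_eq_mul,
      Finset.sum_mul, Finset.mul_sum]
    apply Finset.sum_congr rfl
    intro j _
    ring
  have hquad : ∀ x : Fin n → ℝ,
      x ⬝ᵥ (PSCI ω *ᵥ x) =
        (1 / (1 - ω)) * (x ⬝ᵥ (PA *ᵥ x) - (ω / D ω) * (v ⬝ᵥ x) ^ 2) := by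
    intro x
    rw [hPSCI ω, smul_mulVec, sub_mulVec, smul_mulVec, hmv]
    rw [dotProduct_smul, dotProduct_sub, dotProduct_smul, dotProduct_smul]
    have : x ⬝ᵥ v = v ⬝ᵥ x := dotProduct_comm x v
    rw [this]
    simp only [smul_eq_mul]
    ring
  -- Cauchy-Schwarz for the PA form
  have hCS : ∀ x : Fin n → ℝ, (v ⬝ᵥ x) ^ 2 ≤ (x ⬝ᵥ (PA *ᵥ x)) * σA2 := by
    intro x
    set s : ℝ := v ⬝ᵥ x with hs
    set t : ℝ := s / σA2 with ht
    have key : 0 ≤ (x - t • u) ⬝ᵥ (PA *ᵥ (x - t • u)) := by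
      have := hPA.posSemidef.dotProduct_mulVec_nonneg (x - t • u)
      simpa using this
    have hux : u ⬝ᵥ (PA *ᵥ x) = s := by
      rw [dotProduct_mulVec, show u ᵥ* PA = v by
        rw [hv, ← hPAs.eq, vecMul_transpose, hPAs.eq], ← hs]
    have hxu : x ⬝ᵥ (PA *ᵥ u) = s := by
      rw [hs, hv, dotProduct_comm]
    have expand : (x - t • u) ⬝ᵥ (PA *ᵥ (x - t • u)) =
        x ⬝ᵥ (PA *ᵥ x) - 2 * t * s + t ^ 2 * σA2 := by
      rw [mulVec_sub, sub_dotProduct, dotProduct_sub, dotProduct_sub]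
      rw [mulVec_smul, dotProduct_smul, smul_dotProduct, smul_dotProduct,
        dotProduct_smul, hux, hxu, hσA]
      simp only [smul_eq_mul]
      ring
    rw [expand] at key
    have hts : t * σA2 = s := by
      rw [ht]; field_simp
    nlinarith [key, hσA2, hts, sq_nonneg t]
  refine ⟨hDpos, hsymm, ?_⟩
  rw [posDef_iff_dotProduct_mulVec]
  constructor
  · -- IsHermitian
    rw [Matrix.IsHermitian]
    rw [conjTranspose]
    ext i j
    simp only [map_apply, transpose_apply, star_trivial]
    have := congrFun (congrFun hsymm i) j
    simpa using this
  · intro x hx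
    have hstar : star x = x := by
      funext i; simp
    rw [hstar, hquad x]
    have hQ : 0 < x ⬝ᵥ (PA *ᵥ x) := by simpa using hPA.dotProduct_mulVec_pos hx
    have hs2 : (v ⬝ᵥ x) ^ 2 ≤ (x ⬝ᵥ (PA *ᵥ x)) * σA2 := hCS x
    have hωD : 0 ≤ ω / D ω := div_nonneg hω0 hDpos.le
    have key : (ω / D ω) * (v ⬝ᵥ x) ^ 2 < x ⬝ᵥ (PA *ᵥ x) := by
      calc (ω / D ω) * (v ⬝ᵥ x) ^ 2 ≤ (ω / D ω) * ((x ⬝ᵥ (PA *ᵥ x)) * σA2) :=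
            mul_le_mul_of_nonneg_left hs2 hωD
        _ = (ω * σA2 / D ω) * (x ⬝ᵥ (PA *ᵥ x)) := by ring
        _ < 1 * (x ⬝ᵥ (PA *ᵥ x)) := by
            apply mul_lt_mul_of_pos_right _ hQ
            rw [div_lt_one hDpos]; exact hDω
        _ = x ⬝ᵥ (PA *ᵥ x) := one_mul _
    have : 0 < x ⬝ᵥ (PA *ᵥ x) - (ω / D ω) * (v ⬝ᵥ x) ^ 2 := by linarith
    positivity
end

section
/- Assume σ_m² > 0. There exists ω ∈ [0,1) with tr(P_SCI(ω)) < tr(P_A) if and only if σ_B² < r_A σ_A², where r_A = ‖P_A u‖² / (σ_A² · tr(P_A)). (The optimal SCI filter for agent A with respect to the trace is pertinent exactly under this condition.) -/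
open Matrix

private lemma frob_bound {n : ℕ} (S : Matrix (Fin n) (Fin n) ℝ) (w : Fin n → ℝ) :
    (S *ᵥ w) ⬝ᵥ (S *ᵥ w) ≤ (∑ i, ∑ j, S i j ^ 2) * (w ⬝ᵥ w) := by
  have hw : w ⬝ᵥ w = ∑ j, w j ^ 2 := by simp [dotProduct, sq]
  have hv : (S *ᵥ w) ⬝ᵥ (S *ᵥ w) = ∑ i, (∑ j, S i j * w j) ^ 2 := by
    simp [dotProduct, mulVec, sq]
  rw [hw, hv, Finset.sum_mul]
  exact Finset.sum_le_sum fun i _ => Finset.sum_mul_sq_le_sq_mul_sq Finset.univ _ _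

private lemma key_ineq {n : ℕ} (P : Matrix (Fin n) (Fin n) ℝ) (hP : P.PosSemidef)
    (u : Fin n → ℝ) :
    (P *ᵥ u) ⬝ᵥ (P *ᵥ u) ≤ (u ⬝ᵥ (P *ᵥ u)) * P.trace := by
  classical
  obtain ⟨S, hSS, h⟩ : ∃ S : Matrix (Fin n) (Fin n) ℝ, S * S = P ∧ Sᴴ = S := by
    open scoped MatrixOrder in
    exact ⟨CFC.sqrt P, CFC.sqrt_mul_sqrt_self P (Matrix.nonneg_iff_posSemidef.mpr hP),
      (Matrix.nonneg_iff_posSemidef.mp (CFC.sqrt_nonneg P)).1⟩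
  have hSsym' : ∀ i j, S j i = S i j := by
    intro i j
    have h2 := congrFun (congrFun h i) j
    simpa [Matrix.conjTranspose_apply] using h2
  have hSsym : Sᵀ = S := by
    ext i j
    rw [Matrix.transpose_apply]
    exact hSsym' i j
  have htr : P.trace = ∑ i, ∑ j, S i j ^ 2 := by
    rw [← hSS]
    simp only [Matrix.trace, Matrix.diag, Matrix.mul_apply]
    refine Finset.sum_congr rfl fun i _ => Finset.sum_congr rfl fun j _ => ?_
    rw [hSsym' i j]; ring
  have hPu : P *ᵥ u = S *ᵥ (S *ᵥ u) := by rw [← hSS, ← Matrix.mulVec_mulVec]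
  have hvm : u ᵥ* S = S *ᵥ u := by rw [← Matrix.mulVec_transpose, hSsym]
  have hww : u ⬝ᵥ (P *ᵥ u) = (S *ᵥ u) ⬝ᵥ (S *ᵥ u) := by
    conv_lhs => rw [hPu, Matrix.dotProduct_mulVec, hvm]
  calc (P *ᵥ u) ⬝ᵥ (P *ᵥ u) = (S *ᵥ (S *ᵥ u)) ⬝ᵥ (S *ᵥ (S *ᵥ u)) := by rw [hPu]
    _ ≤ (∑ i, ∑ j, S i j ^ 2) * ((S *ᵥ u) ⬝ᵥ (S *ᵥ u)) := frob_bound S _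
    _ = (u ⬝ᵥ (P *ᵥ u)) * P.trace := by rw [hww, htr]; ring

private lemma trace_pos_of_posDef {n : ℕ} (hn : 1 ≤ n) (P : Matrix (Fin n) (Fin n) ℝ)
    (hP : P.PosDef) : 0 < P.trace := by
  have hdiag : ∀ i, 0 < P i i := by
    intro i
    have hx : (Pi.single i 1 : Fin n → ℝ) ≠ 0 := by
      intro h
      have := congrFun h i
      simp at this
    have h := hP.dotProduct_mulVec_pos hx
    simpa [dotProduct, mulVec, Pi.single_apply, mul_ite, ite_mul,
      Finset.sum_ite_eq, Finset.sum_ite_eq'] using h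
  haveI : Nonempty (Fin n) := ⟨⟨0, hn⟩⟩
  exact Finset.sum_pos (fun i _ => hdiag i) Finset.univ_nonempty

/-- Assuming `σ_m² > 0`: there exists `ω ∈ [0,1)` with
`tr(P_SCI(ω)) < tr P_A` iff `σ_B² < r_A σ_A²`, where
`r_A = ‖P_A u‖² / (σ_A² tr P_A)`. -/
theorem stmt_12 {n : ℕ} (hn : 1 ≤ n)
    (PA PB : Matrix (Fin n) (Fin n) ℝ)
    (hPA : PA.PosDef) (hPAs : PA.IsSymm) (hPB : PB.PosDef) (hPBs : PB.IsSymm)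
    (u : Fin n → ℝ) (hu : u ⬝ᵥ u = 1)
    (σm2 : ℝ)
    (σA2 σB2 : ℝ) (hσA : σA2 = u ⬝ᵥ (PA *ᵥ u)) (hσB : σB2 = u ⬝ᵥ (PB *ᵥ u))
    (D : ℝ → ℝ) (hD : ∀ ω, D ω = ω * σA2 + (1 - ω) * (σB2 + ω * σm2))
    (PSCI : ℝ → Matrix (Fin n) (Fin n) ℝ)
    (hPSCI : ∀ ω, PSCI ω =
      (1 / (1 - ω)) • (PA - (ω / D ω) • vecMulVec (PA *ᵥ u) (PA *ᵥ u)))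
    (hσm : 0 < σm2)
    (rA : ℝ) (hrA : rA = (PA *ᵥ u) ⬝ᵥ (PA *ᵥ u) / (σA2 * PA.trace)) :
    (∃ ω ∈ Set.Ico (0 : ℝ) 1, (PSCI ω).trace < PA.trace) ↔ σB2 < rA * σA2 := by
  have hu0 : u ≠ 0 := by
    intro h; rw [h] at hu; simp at hu
  have hσApos : 0 < σA2 := by
    have := hPA.dotProduct_mulVec_pos hu0
    simpa [hσA] using this
  have hσBpos : 0 < σB2 := by
    have := hPB.dotProduct_mulVec_pos hu0
    simpa [hσB] using this
  have hTpos : 0 < PA.trace := trace_pos_of_posDef hn PA hPA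
  have hkey : (PA *ᵥ u) ⬝ᵥ (PA *ᵥ u) ≤ σA2 * PA.trace := by
    have := key_ineq PA hPA.posSemidef u
    rw [← hσA] at this
    exact this
  have htrace : ∀ ω, (PSCI ω).trace
      = 1 / (1 - ω) * (PA.trace - ω / D ω * ((PA *ᵥ u) ⬝ᵥ (PA *ᵥ u))) := by
    intro ω
    rw [hPSCI ω, Matrix.trace_smul, Matrix.trace_sub, Matrix.trace_smul]
    have hvv : (vecMulVec (PA *ᵥ u) (PA *ᵥ u)).trace = (PA *ᵥ u) ⬝ᵥ (PA *ᵥ u) := by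
      simp [Matrix.trace, Matrix.diag, Matrix.vecMulVec_apply, dotProduct]
    rw [hvv]
    simp [smul_eq_mul]
  set T := PA.trace with hTdef
  set N := (PA *ᵥ u) ⬝ᵥ (PA *ᵥ u) with hNdef
  clear_value T N
  clear hσA hσB hPSCI hu hu0 hPA hPB hPAs hPBs hTdef hNdef hn PA PB u
  have hrAσ : rA * σA2 = N / T := by
    rw [hrA]; field_simp
  rw [hrAσ, lt_div_iff₀ hTpos]
  have hDpos : ∀ ω ∈ Set.Ico (0 : ℝ) 1, 0 < D ω := by
    rintro ω ⟨h0, h1⟩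
    rw [hD]
    nlinarith [mul_nonneg h0 hσApos.le, mul_nonneg h0 hσm.le,
      mul_pos (show (0:ℝ) < 1 - ω by linarith)
        (show (0:ℝ) < σB2 + ω * σm2 by nlinarith [mul_nonneg h0 hσm.le])]
  constructor
  · rintro ⟨ω, ⟨hω0, hω1⟩, hlt⟩
    have hd : 0 < D ω := hDpos ω ⟨hω0, hω1⟩
    have h1 : 0 < 1 - ω := by linarith
    have hωpos : 0 < ω := by
      rcases lt_or_eq_of_le hω0 with h | h
      · exact h
      · exfalso
        rw [htrace ω, ← h] at hlt
        simp at hlt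
    rw [htrace ω] at hlt
    have h2 : T - ω / D ω * N < T * (1 - ω) := by
      rw [one_div_mul_eq_div, div_lt_iff₀ h1] at hlt
      exact hlt
    have hq : ω / D ω * N * D ω = ω * N := by field_simp
    have h3 : ω * T < ω / D ω * N := by nlinarith
    have hTdN : T * D ω < N := by
      nlinarith [mul_lt_mul_of_pos_right h3 hd]
    by_contra hcon
    push_neg at hcon
    rw [hD ω] at hTdN
    nlinarith [mul_le_mul_of_nonneg_left hkey hωpos.le,
      mul_le_mul_of_nonneg_left hcon (le_of_lt h1),
      mul_nonneg (mul_nonneg h1.le hωpos.le) hσm.le]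
  · intro hB
    have hden : 0 < 2 * T * (σA2 + σm2) := by positivity
    set ε := (N - T * σB2) / (2 * T * (σA2 + σm2)) with hε
    clear_value ε
    have hεpos : 0 < ε := by rw [hε]; apply div_pos (by nlinarith) hden
    set ω := min (1/2 : ℝ) ε with hω
    clear_value ω
    have hωpos : 0 < ω := by rw [hω]; exact lt_min (by norm_num) hεpos
    have hω1 : ω < 1 := by
      have h := min_le_left (1/2 : ℝ) ε
      rw [hω]; linarith [h]
    have hωε : ω ≤ ε := by rw [hω]; exact min_le_right _ _
    have hd : 0 < D ω := hDpos ω ⟨hωpos.le, hω1⟩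
    have hεbound : ε * (2 * T * (σA2 + σm2)) = N - T * σB2 := by
      rw [hε]; field_simp
    have hTD : T * D ω < N := by
      rw [hD ω]
      have h1 : ω * σA2 + (1 - ω) * (σB2 + ω * σm2) ≤ σB2 + ω * (σA2 + σm2) := by
        nlinarith [mul_nonneg hωpos.le hσBpos.le,
          mul_nonneg (mul_nonneg hωpos.le hωpos.le) hσm.le]
      have h2 : T * (σB2 + ω * (σA2 + σm2)) ≤ T * σB2 + ε * (T * (σA2 + σm2)) := by
        nlinarith [mul_le_mul_of_nonneg_right hωε
          (show (0:ℝ) ≤ T * (σA2 + σm2) by positivity)]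
      nlinarith [mul_le_mul_of_nonneg_left h1 hTpos.le]
    refine ⟨ω, ⟨hωpos.le, hω1⟩, ?_⟩
    rw [htrace ω]
    have h1 : 0 < 1 - ω := by linarith
    have h6 : ω * T < ω / D ω * N := by
      rw [div_mul_eq_mul_div, lt_div_iff₀ hd]
      nlinarith
    rw [one_div_mul_eq_div, div_lt_iff₀ h1]
    nlinarith
end

section
/- For every ω ∈ [0,1), det(P_SCI(ω)) = det(P_A) · (σ_B² + ω σ_m²) / ((1−ω)^{n−1} · D(ω)). -/
open Matrix

/-- Determinant of the SCI covariance: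
`det(P_SCI(ω)) = det P_A · (σ_B² + ω σ_m²) / ((1−ω)^(n−1) · D(ω))`. -/
theorem stmt_13 {n : ℕ} (hn : 1 ≤ n)
    (PA PB : Matrix (Fin n) (Fin n) ℝ)
    (hPA : PA.PosDef) (hPAs : PA.IsSymm) (hPB : PB.PosDef) (hPBs : PB.IsSymm)
    (u : Fin n → ℝ) (hu : u ⬝ᵥ u = 1)
    (σm2 : ℝ)
    (σA2 σB2 : ℝ) (hσA : σA2 = u ⬝ᵥ (PA *ᵥ u)) (hσB : σB2 = u ⬝ᵥ (PB *ᵥ u))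
    (D : ℝ → ℝ) (hD : ∀ ω, D ω = ω * σA2 + (1 - ω) * (σB2 + ω * σm2))
    (PSCI : ℝ → Matrix (Fin n) (Fin n) ℝ)
    (hPSCI : ∀ ω, PSCI ω =
      (1 / (1 - ω)) • (PA - (ω / D ω) • vecMulVec (PA *ᵥ u) (PA *ᵥ u)))
    (hσm : 0 ≤ σm2) :
    ∀ ω ∈ Set.Ico (0 : ℝ) 1,
      (PSCI ω).det = PA.det * (σB2 + ω * σm2) / ((1 - ω) ^ (n - 1) * D ω) := by
  intro ω hω
  obtain ⟨hω0, hω1⟩ := hω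
  have hune : u ≠ 0 := by
    intro h; rw [h] at hu; simp at hu
  have hσA2pos : 0 < σA2 := by rw [hσA]; exact hPA.dotProduct_mulVec_pos hune
  have hσB2pos : 0 < σB2 := by rw [hσB]; exact hPB.dotProduct_mulVec_pos hune
  have h1ω : (0:ℝ) < 1 - ω := by linarith
  have hDpos : 0 < D ω := by
    rw [hD]
    have : 0 ≤ ω * σA2 := mul_nonneg hω0 hσA2pos.le
    have : 0 < (1 - ω) * (σB2 + ω * σm2) := by
      apply mul_pos h1ω
      nlinarith
    nlinarith
  have hdetA : IsUnit PA.det := (isUnit_iff_ne_zero).2 (ne_of_gt hPA.det_pos)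
  set v := PA *ᵥ u with hv
  -- rewrite PSCI as scaled A + U*V
  have key : PA - (ω / D ω) • vecMulVec v v
      = PA + replicateCol (Fin 1) v * ((-(ω / D ω)) • replicateRow (Fin 1) v) := by
    rw [vecMulVec_eq (Fin 1)]
    rw [Matrix.mul_smul]
    ring_nf
    rw [sub_eq_add_neg, ← neg_smul]
    rfl
  have hdet1 : (PA - (ω / D ω) • vecMulVec v v).det
      = PA.det * (1 - (ω / D ω) * σA2) := by
    rw [key, det_add_mul _ _ hdetA, det_fin_one]
    have hinv : PA⁻¹ *ᵥ v = u := by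
      rw [hv, mulVec_mulVec, Matrix.nonsing_inv_mul PA hdetA, one_mulVec]
    have h00 : (replicateRow (Fin 1) v * (PA⁻¹ * replicateCol (Fin 1) v)) 0 0
        = v ⬝ᵥ (PA⁻¹ *ᵥ v) := by
      simp [Matrix.mul_apply, dotProduct, mulVec, Matrix.replicateRow, Matrix.replicateCol]
    have : ((1 : Matrix (Fin 1) (Fin 1) ℝ) + (-(ω / D ω)) • replicateRow (Fin 1) v * PA⁻¹ * replicateCol (Fin 1) v) 0 0 = 1 - (ω / D ω) * σA2 := by
      simp only [Matrix.add_apply, Matrix.one_apply_eq, Matrix.smul_mul,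
        Matrix.smul_apply, Matrix.mul_assoc, h00, smul_eq_mul]
      rw [hinv, hv, dotProduct_comm, ← hσA]; ring
    rw [this]
  rw [hPSCI, det_smul, hdet1]
  have hcard : Fintype.card (Fin n) = n := by simp
  rw [hcard, hD] at *
  obtain ⟨m, rfl⟩ : ∃ m, n = m + 1 := ⟨n - 1, (Nat.succ_pred_eq_of_pos hn).symm⟩
  simp only [Nat.add_sub_cancel]
  have hDne : ω * σA2 + (1 - ω) * (σB2 + ω * σm2) ≠ 0 := ne_of_gt hDpos
  have h1ωne : (1:ℝ) - ω ≠ 0 := ne_of_gt h1ω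
  field_simp
  have hx : (1 - ω)⁻¹ ^ m * (1 - ω) ^ m = 1 := by rw [← mul_pow, inv_mul_cancel₀ h1ωne, one_pow]
  have hy : (1 - ω)⁻¹ * (1 - ω) = 1 := inv_mul_cancel₀ h1ωne
  rename_i A _ _ _ _
  linear_combination ((1 - ω)⁻¹ * ((1 - ω) * (σB2 + ω * σm2) * A.det)) * hx + ((σB2 + ω * σm2) * A.det) * hy
end

section
/- Assume σ_m² > 0. The function h : ω ↦ det(P_SCI(ω)) is convex on the interval [0,1). -/
open Matrix


lemma key_ineq_s14 (k : ℕ) (t P P1 P2 : ℝ) (ht : 0 < t) (hP : 0 < P) (hP2 : P2 ≤ 0) :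
    0 ≤ 2 * (-(k:ℝ) * t^(k-1) * P + t^k * P1)^2 -
      (t^k * P) * ((k:ℝ) * ((k-1 : ℕ):ℝ) * t^(k-1-1) * P - 2*(k:ℝ)*t^(k-1)*P1 + t^k*P2) := by
  match k with
  | 0 =>
    norm_num
    nlinarith [sq_nonneg P1, mul_nonneg hP.le (neg_nonneg.2 hP2)]
  | 1 =>
    norm_num
    nlinarith [sq_nonneg (P - t*P1), sq_nonneg (t*P1), sq_nonneg P,
      mul_nonneg (mul_nonneg (mul_pos ht ht).le hP.le) (neg_nonneg.2 hP2)]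
  | (j+2) =>
    simp only [show j+2-1 = j+1 from rfl, show j+1-1 = j from rfl]
    have hK : (0:ℝ) ≤ (j:ℝ) + 2 := by positivity
    have hbr : 0 ≤ (((j:ℝ)+2)*P - t*P1)^2 + (t*P1)^2 + ((j:ℝ)+2)*P^2 + t^2*P*(-P2) := by
      have h1 : 0 ≤ ((j:ℝ)+2)*P^2 := mul_nonneg hK (sq_nonneg P)
      have h2 : 0 ≤ t^2*P*(-P2) := mul_nonneg (mul_nonneg (sq_nonneg t) hP.le) (neg_nonneg.2 hP2)
      positivity
    have hid : 2 * (-(((j:ℕ)+2:ℕ):ℝ) * t^(j+1) * P + t^(j+2) * P1)^2 -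
        (t^(j+2) * P) * ((((j:ℕ)+2:ℕ):ℝ) * (((j:ℕ)+1:ℕ):ℝ) * t^j * P - 2*(((j:ℕ)+2:ℕ):ℝ)*t^(j+1)*P1 + t^(j+2)*P2)
        = (t^j*t)^2 * ((((j:ℝ)+2)*P - t*P1)^2 + (t*P1)^2 + ((j:ℝ)+2)*P^2 + t^2*P*(-P2)) := by
      push_cast
      ring
    rw [hid]
    exact mul_nonneg (sq_nonneg _) hbr

lemma aux_convex (k : ℕ) (a b m C : ℝ) (ha : 0 < a) (hb : 0 < b) (hm : 0 < m) (hC : 0 < C) :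
    ConvexOn ℝ (Set.Ico (0:ℝ) 1)
      (fun ω => C * ((1 - ω)^k * ((1 - ω) + a * ω / (b + m * ω)))⁻¹) := by
  have hp : ∀ x ∈ Set.Ico (0:ℝ) 1, 0 < b + m * x := fun x hx => by nlinarith [hx.1]
  have htp : ∀ x ∈ Set.Ico (0:ℝ) 1, 0 < 1 - x := fun x hx => by linarith [hx.2]
  set φ : ℝ → ℝ := fun ω => (1 - ω) + a * ω / (b + m * ω) with hφdef
  set φ1 : ℝ → ℝ := fun ω => -1 + a * b / (b + m * ω)^2 with hφ1def
  set φ2 : ℝ → ℝ := fun ω => -(2 * a * b * m) / (b + m * ω)^3 with hφ2def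
  set G : ℝ → ℝ := fun ω => (1 - ω)^k * φ ω with hGdef
  set G1 : ℝ → ℝ := fun ω => -(k:ℝ) * (1-ω)^(k-1) * φ ω + (1-ω)^k * φ1 ω with hG1def
  set G2 : ℝ → ℝ := fun ω =>
    (k:ℝ) * ((k-1 : ℕ):ℝ) * (1-ω)^(k-1-1) * φ ω - 2*(k:ℝ)*(1-ω)^(k-1)*φ1 ω + (1-ω)^k * φ2 ω
    with hG2def
  have hφpos : ∀ x ∈ Set.Ico (0:ℝ) 1, 0 < φ x := by
    intro x hx
    have h1 := hp x hx
    have h2 := htp x hx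
    have h3 : 0 ≤ a * x / (b + m * x) := div_nonneg (by nlinarith [hx.1]) h1.le
    simp only [hφdef]
    linarith
  have hGpos : ∀ x ∈ Set.Ico (0:ℝ) 1, 0 < G x := by
    intro x hx
    exact mul_pos (pow_pos (htp x hx) k) (hφpos x hx)
  -- derivatives
  have hφ' : ∀ x ∈ Set.Ico (0:ℝ) 1, HasDerivAt φ (φ1 x) x := by
    intro x hx
    have hpx := (hp x hx).ne'
    have h1 : HasDerivAt (fun ω : ℝ => 1 - ω) (-1) x := by
      simpa using (hasDerivAt_id x).const_sub 1
    have h2 : HasDerivAt (fun ω : ℝ => b + m * ω) m x := by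
      simpa using ((hasDerivAt_id x).const_mul m).const_add b
    have h3 : HasDerivAt (fun ω : ℝ => a * ω) a x := by
      simpa using (hasDerivAt_id x).const_mul a
    have h4 := h3.div h2 hpx
    have h5 := h1.add h4
    convert h5 using 1
    · rfl
    · rfl
    · rfl
    simp only [hφ1def]
    field_simp
    ring
  have hφ1' : ∀ x ∈ Set.Ico (0:ℝ) 1, HasDerivAt φ1 (φ2 x) x := by
    intro x hx
    have hpx := (hp x hx).ne'
    have h2 : HasDerivAt (fun ω : ℝ => b + m * ω) m x := by
      simpa using ((hasDerivAt_id x).const_mul m).const_add b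
    have h4 := ((hasDerivAt_const x (a*b)).div (h2.pow 2) (pow_ne_zero 2 hpx)).const_add (-1 : ℝ)
    convert h4 using 1
    · rfl
    · rfl
    · rfl
    simp only [hφ2def, Pi.pow_apply]
    field_simp
    ring
  have hG' : ∀ x ∈ Set.Ico (0:ℝ) 1, HasDerivAt G (G1 x) x := by
    intro x hx
    have h1 : HasDerivAt (fun ω : ℝ => 1 - ω) (-1) x := by
      simpa using (hasDerivAt_id x).const_sub 1
    have h5 := (h1.pow k).mul (hφ' x hx)
    convert h5 using 1
    · rfl
    · rfl
    · rfl
    simp only [hG1def, Pi.pow_apply]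
    ring
  have hG1' : ∀ x ∈ Set.Ico (0:ℝ) 1, HasDerivAt G1 (G2 x) x := by
    intro x hx
    have h1 : HasDerivAt (fun ω : ℝ => 1 - ω) (-1) x := by
      simpa using (hasDerivAt_id x).const_sub 1
    have hA := ((h1.pow (k-1)).const_mul (-(k:ℝ))).mul (hφ' x hx)
    have hB := (h1.pow k).mul (hφ1' x hx)
    have h5 := hA.add hB
    convert h5 using 1
    · rfl
    · rfl
    · rfl
    simp only [hG2def, Pi.pow_apply]
    ring
  -- apply the convexity criterion
  apply convexOn_of_hasDerivWithinAt2_nonneg (f' := fun x => -C * G1 x / (G x)^2)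
    (f'' := fun x => C * (2 * (G1 x)^2 - G x * G2 x) / (G x)^3) (convex_Ico 0 1)
  · -- continuity
    have hGc : ContinuousOn G (Set.Ico (0:ℝ) 1) := by
      intro x hx
      exact ((hG' x hx).continuousAt).continuousWithinAt
    exact continuousOn_const.mul (hGc.inv₀ fun x hx => (hGpos x hx).ne')
  · -- first derivative
    rw [interior_Ico]
    intro x hx
    have hx' : x ∈ Set.Ico (0:ℝ) 1 := ⟨hx.1.le, hx.2⟩
    have h := ((hG' x hx').inv (hGpos x hx').ne').const_mul C
    have h2 : HasDerivAt (fun ω => C * (G ω)⁻¹) (-C * G1 x / (G x)^2) x := by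
      convert h using 1
      · rfl
      · rfl
      · rfl
      field_simp
    exact h2.hasDerivWithinAt
  · -- second derivative
    rw [interior_Ico]
    intro x hx
    have hx' : x ∈ Set.Ico (0:ℝ) 1 := ⟨hx.1.le, hx.2⟩
    have hGx := (hGpos x hx').ne'
    have hnum := (hG1' x hx').const_mul (-C)
    have hden := (hG' x hx').pow 2
    have h := hnum.div hden (pow_ne_zero 2 hGx)
    have h2 : HasDerivAt (fun ω => -C * G1 ω / (G ω)^2)
        (C * (2 * (G1 x)^2 - G x * G2 x) / (G x)^3) x := by
      convert h using 1
      · rfl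
      · rfl
      · rfl
      simp only [Pi.pow_apply]
      field_simp
      ring
    exact h2.hasDerivWithinAt
  · -- nonnegativity
    rw [interior_Ico]
    intro x hx
    have hx' : x ∈ Set.Ico (0:ℝ) 1 := ⟨hx.1.le, hx.2⟩
    have hGx := hGpos x hx'
    have hkey := key_ineq_s14 k (1-x) (φ x) (φ1 x) (φ2 x) (htp x hx') (hφpos x hx')
      (by
        simp only [hφ2def]
        have := hp x hx'
        exact div_nonpos_of_nonpos_of_nonneg
          (by nlinarith [mul_pos (mul_pos ha hb) hm]) (by positivity))
    have h2 : 0 ≤ 2 * (G1 x)^2 - G x * G2 x := by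
      simpa only [hGdef, hG1def, hG2def] using hkey
    positivity

/-- Assuming `σ_m² > 0`, the function `h : ω ↦ det(P_SCI(ω))` is convex on
`[0,1)`. -/
theorem stmt_14 {n : ℕ} (hn : 1 ≤ n)
    (PA PB : Matrix (Fin n) (Fin n) ℝ)
    (hPA : PA.PosDef) (hPAs : PA.IsSymm) (hPB : PB.PosDef) (hPBs : PB.IsSymm)
    (u : Fin n → ℝ) (hu : u ⬝ᵥ u = 1)
    (σm2 : ℝ)
    (σA2 σB2 : ℝ) (hσA : σA2 = u ⬝ᵥ (PA *ᵥ u)) (hσB : σB2 = u ⬝ᵥ (PB *ᵥ u))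
    (D : ℝ → ℝ) (hD : ∀ ω, D ω = ω * σA2 + (1 - ω) * (σB2 + ω * σm2))
    (PSCI : ℝ → Matrix (Fin n) (Fin n) ℝ)
    (hPSCI : ∀ ω, PSCI ω =
      (1 / (1 - ω)) • (PA - (ω / D ω) • vecMulVec (PA *ᵥ u) (PA *ᵥ u)))
    (hσm : 0 < σm2) :
    ConvexOn ℝ (Set.Ico (0 : ℝ) 1) (fun ω => (PSCI ω).det) := by
  have hune : u ≠ 0 := by
    intro h
    rw [h] at hu
    simp at hu
  have hσApos : 0 < σA2 := by
    have := hPA.dotProduct_mulVec_pos hune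
    simpa [hσA] using this
  have hσBpos : 0 < σB2 := by
    have := hPB.dotProduct_mulVec_pos hune
    simpa [hσB] using this
  have hCpos : 0 < PA.det := hPA.det_pos
  obtain ⟨k, rfl⟩ : ∃ k, n = k + 1 := ⟨n - 1, (Nat.succ_pred_eq_of_pos hn).symm⟩
  have hconv := aux_convex k σA2 σB2 σm2 PA.det hσApos hσBpos hσm hCpos
  -- equality of the two functions on [0,1)
  have heq : ∀ ω ∈ Set.Ico (0:ℝ) 1, (PSCI ω).det
      = PA.det * ((1 - ω)^k * ((1 - ω) + σA2 * ω / (σB2 + σm2 * ω)))⁻¹ := by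
    intro ω hω
    have ht : 0 < 1 - ω := by linarith [hω.2]
    have hpp : 0 < σB2 + σm2 * ω := by nlinarith [hω.1]
    have hDpos : 0 < D ω := by
      rw [hD]
      nlinarith [hω.1, hω.2, mul_nonneg hω.1 hσApos.le]
    set c := ω / D ω with hc
    have hfact : PA - c • vecMulVec (PA *ᵥ u) (PA *ᵥ u)
        = PA * (1 + replicateCol Unit ((-c) • u) * replicateRow Unit (PA *ᵥ u)) := by
      rw [Matrix.mul_add, Matrix.mul_one, ← Matrix.mul_assoc, ← replicateCol_mulVec,
        mulVec_smul, replicateCol_smul, Matrix.smul_mul, ← vecMulVec_eq, neg_smul, ← sub_eq_add_neg]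
    have hdet1 : (1 + replicateCol Unit ((-c) • u) * replicateRow Unit (PA *ᵥ u)).det
        = 1 - c * σA2 := by
      rw [det_one_add_replicateCol_mul_replicateRow, dotProduct_smul, dotProduct_comm, ← hσA]
      simp [neg_smul]
      ring
    have hdet : (PSCI ω).det = (1/(1-ω))^(k+1) * (PA.det * (1 - c * σA2)) := by
      rw [hPSCI ω, det_smul, ← hc, hfact, det_mul, hdet1, Fintype.card_fin]
    rw [hdet]
    have h1 : 1 - c * σA2 = (1 - ω) * (σB2 + σm2 * ω) / D ω := by
      rw [hc]
      field_simp [hDpos.ne']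
      rw [hD]
      ring
    have h2 : (1 - ω) + σA2 * ω / (σB2 + σm2 * ω) = D ω / (σB2 + σm2 * ω) := by
      rw [hD, add_div' _ _ _ hpp.ne']
      ring
    rw [h1, h2]
    have hne1 := ht.ne'
    have hne2 := hpp.ne'
    have hne3 := hDpos.ne'
    rw [div_pow, one_pow]
    field_simp
    ring
  -- transfer convexity through the pointwise equality
  refine ⟨convex_Ico 0 1, ?_⟩
  intro x hx y hy α β hα hβ hαβ
  have hmem : α • x + β • y ∈ Set.Ico (0:ℝ) 1 := (convex_Ico (0:ℝ) 1) hx hy hα hβ hαβ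
  simp only [smul_eq_mul] at hmem ⊢
  show (PSCI (α * x + β * y)).det ≤ α * (PSCI x).det + β * (PSCI y).det
  rw [heq _ hmem, heq _ hx, heq _ hy]
  have := hconv.2 hx hy hα hβ hαβ
  simpa using this
end

section
/- Assume σ_m² > 0. There exists ω ∈ [0,1) with det(P_SCI(ω)) < det(P_A) if and only if n σ_B² < σ_A², i.e., σ_B² < σ_A²/n. (The optimal SCI filter for agent A with respect to the determinant is pertinent exactly under this condition.) -/
open Matrix


lemma aux_pow (k : ℕ) (ω : ℝ) (h1 : ω ≤ 1) :
    (1 - ω)^k * (1 + k*ω) ≤ 1 := by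
  induction k with
  | zero => simp
  | succ k ih =>
    have hp : (0:ℝ) ≤ (1-ω)^k := pow_nonneg (by linarith) k
    rw [pow_succ]
    push_cast
    nlinarith [mul_nonneg hp (sq_nonneg ω), mul_nonneg (mul_nonneg hp (sq_nonneg ω)) (Nat.cast_nonneg k : (0:ℝ) ≤ k)]

lemma core (k : ℕ) (σA2 σB2 σm2 : ℝ) (hA : 0 < σA2) (hB : 0 < σB2) (hm : 0 < σm2) :
    (∃ ω ∈ Set.Ico (0:ℝ) 1, σB2 + ω*σm2 < (1-ω)^k * (ω*σA2 + (1-ω)*(σB2+ω*σm2))) ↔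
      ((k:ℝ)+1) * σB2 < σA2 := by
  constructor
  · rintro ⟨ω, ⟨hω0, hω1⟩, hlt⟩
    by_contra hcon
    push_neg at hcon
    have hp : (0:ℝ) ≤ (1-ω)^k := pow_nonneg (by linarith) k
    have h1 : (1-ω)^k * (1 + k*ω) ≤ 1 := aux_pow k ω hω1.le
    have h2 : (1-ω)^k * (1-ω) ≤ 1 := by
      calc (1-ω)^k * (1-ω) = (1-ω)^(k+1) := (pow_succ _ _).symm
      _ ≤ 1 := pow_le_one₀ (by linarith) (by linarith)
    nlinarith [mul_le_mul_of_nonneg_left hcon (mul_nonneg hp hω0),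
      mul_le_mul_of_nonneg_left h1 hB.le,
      mul_le_mul_of_nonneg_left h2 (mul_nonneg hω0 hm.le)]
  · intro hlt
    have hεpos : 0 < σA2 - ((k:ℝ)+1)*σB2 := by linarith
    have hCpos : (0:ℝ) < 2*(|σm2 + k*σA2 - k*σB2 + k*σm2|+1) := by positivity
    refine ⟨min (1/2 : ℝ) ((σA2 - ((k:ℝ)+1)*σB2)/(2*(|σm2 + k*σA2 - k*σB2 + k*σm2|+1))),
      ⟨?_, ?_⟩, ?_⟩
    · exact (lt_min (by norm_num) (by positivity)).le
    · exact lt_of_le_of_lt (min_le_left _ _) (by norm_num)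
    set ω := min (1/2 : ℝ) ((σA2 - ((k:ℝ)+1)*σB2)/(2*(|σm2 + k*σA2 - k*σB2 + k*σm2|+1))) with hωdef
    have hω0 : 0 < ω := lt_min (by norm_num) (by positivity)
    have hω1 : ω < 1 := lt_of_le_of_lt (min_le_left _ _) (by norm_num)
    have hωC : ω * (σm2 + k*σA2 - k*σB2 + k*σm2) < σA2 - ((k:ℝ)+1)*σB2 := by
      have h : ω * (2*(|σm2 + k*σA2 - k*σB2 + k*σm2|+1)) ≤ σA2 - ((k:ℝ)+1)*σB2 :=
        (le_div_iff₀ hCpos).mp (min_le_right _ _)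
      nlinarith [mul_le_mul_of_nonneg_left (le_abs_self (σm2 + k*σA2 - k*σB2 + k*σm2)) hω0.le,
        mul_pos hω0 (show (0:ℝ) < |σm2 + k*σA2 - k*σB2 + k*σm2| + 2 by positivity)]
    have hbern : 1 - (k:ℝ)*ω ≤ (1-ω)^k := by
      have := one_add_mul_le_pow (show (-2:ℝ) ≤ -ω by linarith) k
      simpa [mul_comm, sub_eq_add_neg] using this
    have hDpos : 0 < ω*σA2 + (1-ω)*(σB2+ω*σm2) := by
      have h1 : 0 < ω*σA2 := mul_pos hω0 hA
      have h2 : 0 < (1-ω)*(σB2+ω*σm2) :=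
        mul_pos (by linarith) (by nlinarith [mul_pos hω0 hm])
      linarith
    have hmono := mul_le_mul_of_nonneg_right hbern hDpos.le
    have hkey : σB2 + ω*σm2 < (1 - (k:ℝ)*ω) * (ω*σA2 + (1-ω)*(σB2+ω*σm2)) := by
      have hcube : 0 ≤ (k:ℝ)*ω^3*σm2 := by positivity
      nlinarith [mul_pos hω0 (sub_pos.mpr hωC)]
    linarith


/-- Assuming `σ_m² > 0`: there exists `ω ∈ [0,1)` with
`det(P_SCI(ω)) < det P_A` iff `n σ_B² < σ_A²`. -/
theorem stmt_16 {n : ℕ} (hn : 1 ≤ n)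
    (PA PB : Matrix (Fin n) (Fin n) ℝ)
    (hPA : PA.PosDef) (hPAs : PA.IsSymm) (hPB : PB.PosDef) (hPBs : PB.IsSymm)
    (u : Fin n → ℝ) (hu : u ⬝ᵥ u = 1)
    (σm2 : ℝ)
    (σA2 σB2 : ℝ) (hσA : σA2 = u ⬝ᵥ (PA *ᵥ u)) (hσB : σB2 = u ⬝ᵥ (PB *ᵥ u))
    (D : ℝ → ℝ) (hD : ∀ ω, D ω = ω * σA2 + (1 - ω) * (σB2 + ω * σm2))
    (PSCI : ℝ → Matrix (Fin n) (Fin n) ℝ)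
    (hPSCI : ∀ ω, PSCI ω =
      (1 / (1 - ω)) • (PA - (ω / D ω) • vecMulVec (PA *ᵥ u) (PA *ᵥ u)))
    (hσm : 0 < σm2) :
    (∃ ω ∈ Set.Ico (0 : ℝ) 1, (PSCI ω).det < PA.det) ↔ (n : ℝ) * σB2 < σA2 := by
  obtain ⟨k, rfl⟩ : ∃ k, n = k + 1 := ⟨n - 1, (Nat.succ_pred_eq_of_pos hn).symm⟩
  have hu0 : u ≠ 0 := by
    intro h; rw [h] at hu; simp at hu
  have hA : 0 < σA2 := by rw [hσA]; simpa using hPA.dotProduct_mulVec_pos hu0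
  have hB : 0 < σB2 := by rw [hσB]; simpa using hPB.dotProduct_mulVec_pos hu0
  have hdet : 0 < PA.det := hPA.det_pos
  -- reduce det inequality for each ω ∈ [0,1)
  have main : ∀ ω ∈ Set.Ico (0:ℝ) 1,
      ((PSCI ω).det < PA.det ↔ σB2 + ω*σm2 < (1-ω)^k * (ω*σA2 + (1-ω)*(σB2+ω*σm2))) := by
    rintro ω ⟨hω0, hω1⟩
    have ht : (0:ℝ) < 1 - ω := by linarith
    have hDpos : 0 < D ω := by
      rw [hD]
      have h1 : 0 ≤ ω*σA2 := mul_nonneg hω0 hA.le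
      have h2 : 0 < (1-ω)*(σB2+ω*σm2) := mul_pos ht (by nlinarith [mul_nonneg hω0 hσm.le])
      linarith
    set v := PA *ᵥ u with hv
    have hfac : PA - (ω / D ω) • vecMulVec v v = PA * (1 - (ω / D ω) • vecMulVec u v) := by
      have hmv : PA * vecMulVec u v = vecMulVec v v := by
        ext i j
        simp [Matrix.mul_apply, vecMulVec_apply, hv, Matrix.mulVec, dotProduct,
          Finset.sum_mul, mul_assoc]
      rw [Matrix.mul_sub, Matrix.mul_one, Matrix.mul_smul, hmv]
    have hdet1 : det (1 - (ω / D ω) • vecMulVec u v) = 1 - (ω / D ω) * σA2 := by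
      have h1 : (1 : Matrix (Fin (k+1)) (Fin (k+1)) ℝ) - (ω / D ω) • vecMulVec u v
          = 1 + replicateCol Unit ((-(ω / D ω)) • u) * replicateRow Unit v := by
        rw [← vecMulVec_eq Unit]
        ext i j
        simp [vecMulVec_apply]
        ring
      rw [h1, det_one_add_replicateCol_mul_replicateRow]
      have : v ⬝ᵥ u = σA2 := by rw [hσA, dotProduct_comm]
      simp [dotProduct_smul, this]
      ring
    have hd : (PSCI ω).det
        = (1/(1-ω))^(k+1) * (PA.det * (1 - (ω / D ω) * σA2)) := by
      rw [hPSCI, det_smul, hfac, det_mul, hdet1]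
      simp [Fintype.card_fin]
    have hDne : D ω ≠ 0 := hDpos.ne'
    have htne : (1:ℝ) - ω ≠ 0 := ht.ne'
    have hd2 : (PSCI ω).det
        = PA.det * ((σB2 + ω*σm2) / ((1-ω)^k * D ω)) := by
      rw [hd]
      have h1 : 1 - (ω / D ω) * σA2 = (1-ω)*(σB2+ω*σm2) / D ω := by
        rw [eq_div_iff hDne, hD]
        field_simp
        ring
      rw [h1]
      rw [one_div, inv_pow, pow_succ]
      field_simp
    rw [hd2]
    have hpos : 0 < (1-ω)^k * D ω := mul_pos (pow_pos ht k) hDpos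
    rw [show (1-ω)^k * (ω*σA2 + (1-ω)*(σB2+ω*σm2)) = (1-ω)^k * D ω by rw [hD]]
    constructor
    · intro h
      have := (mul_lt_iff_lt_one_right hdet).mp h
      exact (div_lt_one hpos).mp this
    · intro h
      exact (mul_lt_iff_lt_one_right hdet).mpr ((div_lt_one hpos).mpr h)
  constructor
  · rintro ⟨ω, hω, hlt⟩
    have := (core k σA2 σB2 σm2 hA hB hσm).mp ⟨ω, hω, (main ω hω).mp hlt⟩
    push_cast
    linarith
  · intro h
    obtain ⟨ω, hω, hlt⟩ := (core k σA2 σB2 σm2 hA hB hσm).mpr (by push_cast at h ⊢; linarith)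
    exact ⟨ω, hω, (main ω hω).mpr hlt⟩
end

section
/- Consistency of the SCI filter: let ω ∈ [0,1) and set w = (ω/D(ω)) P_A u ∈ ℝⁿ. Let P̃_A, P̃_B be symmetric n×n matrices and P̃_AB an n×n matrix such that the 2n×2n block matrix [[P̃_A, P̃_AB],[P̃_ABᵀ, P̃_B]] is positive semidefinite, P̃_A ⪯ P_A, and P̃_B ⪯ P_B. Set σ̃_A² = uᵀ P̃_A u, σ̃_B² = uᵀ P̃_B u, γ̃ = uᵀ P̃_AB u, and define the fused mean-squared-error matrix P̃_F = P̃_A + (σ̃_A² + σ̃_B² − 2γ̃ + σ_m²) w wᵀ − (P̃_A − P̃_AB) u wᵀ − w uᵀ (P̃_A − P̃_ABᵀ). Then P̃_F ⪯ P_SCI(ω). -/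
open Matrix

private lemma vmv_mulVec {n : ℕ} (v w x : Fin n → ℝ) :
    (vecMulVec v w) *ᵥ x = (w ⬝ᵥ x) • v := by
  ext i
  simp only [vecMulVec_apply, mulVec, dotProduct, Pi.smul_apply, smul_eq_mul, Finset.sum_mul]
  exact Finset.sum_congr rfl fun j _ => by ring

private lemma dot_swap {n : ℕ} (M : Matrix (Fin n) (Fin n) ℝ) (x y : Fin n → ℝ) :
    x ⬝ᵥ (M *ᵥ y) = y ⬝ᵥ (Mᵀ *ᵥ x) := by
  rw [dotProduct_mulVec, dotProduct_comm, ← vecMul_transpose, transpose_transpose]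

private lemma vmv_transpose {n : ℕ} (v w : Fin n → ℝ) :
    (vecMulVec v w)ᵀ = vecMulVec w v := by
  ext i j; simp [vecMulVec_apply, mul_comm]


set_option maxHeartbeats 1000000 in
/-- Consistency of the SCI filter: for any admissible joint covariance
`[[P̃_A, P̃_AB],[P̃_ABᵀ, P̃_B]] ⪰ 0` with `P̃_A ⪯ P_A` and `P̃_B ⪯ P_B`, the
fused MSE matrix `P̃_F` (with gain `w = (ω/D(ω)) P_A u`) satisfies
`P̃_F ⪯ P_SCI(ω)` for all `ω ∈ [0,1)`. -/
theorem stmt_17 {n : ℕ} (hn : 1 ≤ n)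
    (PA PB : Matrix (Fin n) (Fin n) ℝ)
    (hPA : PA.PosDef) (hPAs : PA.IsSymm) (hPB : PB.PosDef) (hPBs : PB.IsSymm)
    (u : Fin n → ℝ) (hu : u ⬝ᵥ u = 1)
    (σm2 : ℝ) (hσm : 0 ≤ σm2)
    (σA2 σB2 : ℝ) (hσA : σA2 = u ⬝ᵥ (PA *ᵥ u)) (hσB : σB2 = u ⬝ᵥ (PB *ᵥ u))
    (D : ℝ → ℝ) (hD : ∀ ω, D ω = ω * σA2 + (1 - ω) * (σB2 + ω * σm2))
    (PSCI : ℝ → Matrix (Fin n) (Fin n) ℝ)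
    (hPSCI : ∀ ω, PSCI ω =
      (1 / (1 - ω)) • (PA - (ω / D ω) • vecMulVec (PA *ᵥ u) (PA *ᵥ u)))
    (ω : ℝ) (hω : ω ∈ Set.Ico (0 : ℝ) 1)
    (w : Fin n → ℝ) (hw : w = (ω / D ω) • (PA *ᵥ u))
    (PtA PtB PtAB : Matrix (Fin n) (Fin n) ℝ)
    (hPtAs : PtA.IsSymm) (hPtBs : PtB.IsSymm)
    (hblock : (Matrix.fromBlocks PtA PtAB PtABᵀ PtB).PosSemidef)
    (hPtA : (PA - PtA).PosSemidef) (hPtB : (PB - PtB).PosSemidef)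
    (σtA2 σtB2 γt : ℝ)
    (hσtA : σtA2 = u ⬝ᵥ (PtA *ᵥ u)) (hσtB : σtB2 = u ⬝ᵥ (PtB *ᵥ u))
    (hγt : γt = u ⬝ᵥ (PtAB *ᵥ u))
    (PtF : Matrix (Fin n) (Fin n) ℝ)
    (hPtF : PtF = PtA + (σtA2 + σtB2 - 2 * γt + σm2) • vecMulVec w w
      - vecMulVec ((PtA - PtAB) *ᵥ u) w
      - vecMulVec w (u ᵥ* (PtA - PtABᵀ))) :
    (PSCI ω - PtF).PosSemidef := by
  obtain ⟨hω0, hω1⟩ := hω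
  have hune : u ≠ 0 := by
    intro h; rw [h] at hu; simp at hu
  have hσA2 : 0 < σA2 := by
    have := hPA.dotProduct_mulVec_pos hune
    rw [hσA]; simpa using this
  have hσB2 : 0 < σB2 := by
    have := hPB.dotProduct_mulVec_pos hune
    rw [hσB]; simpa using this
  have h1ω : 0 < 1 - ω := by linarith
  have hDpos : 0 < D ω := by
    rw [hD]
    nlinarith [mul_nonneg hω0 hσm, mul_nonneg hω0 hσA2.le]
  have hqr : u ᵥ* (PtA - PtABᵀ) = (PtA - PtAB) *ᵥ u := by
    have h : (PtA - PtABᵀ) = (PtA - PtAB)ᵀ := by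
      rw [transpose_sub, hPtAs.eq]
    rw [h, vecMul_transpose]
  rcases eq_or_lt_of_le hω0 with h0 | h0
  · subst h0
    have hw0 : w = 0 := by rw [hw]; simp
    have hPtF0 : PtF = PtA := by
      rw [hPtF, hw0]
      ext i j
      simp [vecMulVec_apply]
    have hPS : PSCI 0 = PA := by
      rw [hPSCI]; simp
    rw [hPS, hPtF0]; exact hPtA
  · set c : ℝ := ω / D ω with hc
    have hcD : c * (ω * σA2 + (1 - ω) * (σB2 + ω * σm2)) = ω := by
      rw [hc, ← hD]; field_simp
    have hPtF' : PtF = PtA + (σtA2 + σtB2 - 2 * γt + σm2) • vecMulVec w w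
        - vecMulVec ((PtA - PtAB) *ᵥ u) w - vecMulVec w ((PtA - PtAB) *ᵥ u) := by
      rw [hPtF, hqr]
    refine posSemidef_iff_dotProduct_mulVec.mpr ⟨?_, ?_⟩
    · rw [IsHermitian, conjTranspose_eq_transpose_of_trivial, transpose_sub]
      have h1 : (PSCI ω)ᵀ = PSCI ω := by
        rw [hPSCI]
        rw [transpose_smul, transpose_sub, transpose_smul, vmv_transpose, hPAs.eq]
      have h2 : PtFᵀ = PtF := by
        rw [hPtF']
        simp only [transpose_sub, transpose_add, transpose_smul, vmv_transpose, hPtAs.eq]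
        abel
      rw [h1, h2]
    · intro x
      have hsx : star x = x := by
        funext i; simp
      rw [hsx]
      set p := x ⬝ᵥ (PA *ᵥ u) with hp
      set t := c * p with ht
      have sPA : u ⬝ᵥ (PA *ᵥ x) = p := by rw [dot_swap, hPAs.eq]
      have sPtA : u ⬝ᵥ (PtA *ᵥ x) = x ⬝ᵥ (PtA *ᵥ u) := by rw [dot_swap, hPtAs.eq]
      have sPtABT : u ⬝ᵥ (PtABᵀ *ᵥ x) = x ⬝ᵥ (PtAB *ᵥ u) := by
        rw [dot_swap, transpose_transpose]
      have sPtABTu : u ⬝ᵥ (PtABᵀ *ᵥ u) = γt := by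
        rw [dot_swap, transpose_transpose, hγt]
      have ePtF : x ⬝ᵥ (PtF *ᵥ x)
          = x ⬝ᵥ (PtA *ᵥ x) + (σtA2 + σtB2 - 2 * γt + σm2) * t ^ 2
            - 2 * t * (x ⬝ᵥ (PtA *ᵥ u) - x ⬝ᵥ (PtAB *ᵥ u)) := by
        rw [hPtF', hw]
        simp only [sub_mulVec, add_mulVec, smul_mulVec, vmv_mulVec, mulVec_sub,
          smul_dotProduct, dotProduct_smul, dotProduct_sub, sub_dotProduct, dotProduct_add,
          add_dotProduct, smul_eq_mul, dotProduct_comm x (PA *ᵥ u), ← hp]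
        rw [dotProduct_comm (PA *ᵥ u) x, dotProduct_comm (PtA *ᵥ u) x,
          dotProduct_comm (PtAB *ᵥ u) x, ← hp, ← ht]
        ring
      have hωne : ω ≠ 0 := h0.ne'
      have h1ne : (1:ℝ) - ω ≠ 0 := h1ω.ne'
      have hDne : ω * σA2 + (1 - ω) * (σB2 + ω * σm2) ≠ 0 := by
        rw [← hD]; exact hDpos.ne'
      have ePSCI : x ⬝ᵥ (PSCI ω *ᵥ x)
          = (1 / (1 - ω)) * (x ⬝ᵥ (PA *ᵥ x) - c * p ^ 2) := by
        rw [hPSCI, ← hc]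
        simp only [smul_mulVec, sub_mulVec, vmv_mulVec, smul_dotProduct,
          dotProduct_smul, dotProduct_sub, smul_eq_mul]
        rw [dotProduct_comm (PA *ᵥ u) x, ← hp]
        ring
      have F1 : x ⬝ᵥ (PtA *ᵥ x) - 2 * t * (x ⬝ᵥ (PtA *ᵥ u)) + t ^ 2 * σtA2
          ≤ x ⬝ᵥ (PA *ᵥ x) - 2 * t * p + t ^ 2 * σA2 := by
        have h := hPtA.dotProduct_mulVec_nonneg (x - t • u)
        have hst : star (x - t • u) = x - t • u := funext fun i => by simp
        rw [hst] at h
        simp only [sub_mulVec, mulVec_sub, mulVec_smul, dotProduct_sub, sub_dotProduct,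
          dotProduct_smul, smul_dotProduct, smul_eq_mul] at h
        rw [sPA, sPtA, ← hσA, ← hσtA, ← hp] at h
        linarith [h]
      have F2 : σtB2 ≤ σB2 := by
        have h := hPtB.dotProduct_mulVec_nonneg u
        have hst : star u = u := funext fun i => by simp
        rw [hst, sub_mulVec, dotProduct_sub, ← hσB, ← hσtB] at h
        linarith
      have F3 : 0 ≤ ω ^ 2 * (x ⬝ᵥ (PtA *ᵥ x) - 2 * t * (x ⬝ᵥ (PtA *ᵥ u)) + t ^ 2 * σtA2)
          - 2 * ω * (1 - ω) * t * (x ⬝ᵥ (PtAB *ᵥ u) - t * γt)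
          + (1 - ω) ^ 2 * t ^ 2 * σtB2 := by
        have h := hblock.dotProduct_mulVec_nonneg (Sum.elim (ω • (x - t • u)) ((-((1 - ω) * t)) • u))
        have hst : star (Sum.elim (ω • (x - t • u)) ((-((1 - ω) * t)) • u))
            = Sum.elim (ω • (x - t • u)) ((-((1 - ω) * t)) • u) :=
          funext fun i => by cases i <;> simp
        rw [hst, fromBlocks_mulVec, sumElim_dotProduct_sumElim] at h
        simp only [Sum.elim_comp_inl, Sum.elim_comp_inr, mulVec_smul, mulVec_sub,
          dotProduct_add, dotProduct_sub, sub_dotProduct,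
          smul_dotProduct, dotProduct_smul, smul_eq_mul] at h
        rw [sPtA, sPtABT, sPtABTu, ← hσtA, ← hσtB, ← hγt] at h
        linarith [h]
      have stepA : (1 / (1 - ω)) * (x ⬝ᵥ (PA *ᵥ x) - c * p ^ 2)
          = (1 / (1 - ω)) * (x ⬝ᵥ (PA *ᵥ x) - 2 * t * p + t ^ 2 * σA2)
            + (1 / ω) * (t ^ 2 * σB2) + σm2 * t ^ 2 := by
        rw [ht, hc, hD]
        field_simp
        ring
      rw [sub_mulVec, dotProduct_sub, ePSCI, ePtF, stepA]
      have hA' := mul_le_mul_of_nonneg_left F1 hω0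
      have hB' : (1 - ω) * (t ^ 2 * σtB2) ≤ (1 - ω) * (t ^ 2 * σB2) :=
        mul_le_mul_of_nonneg_left
          (mul_le_mul_of_nonneg_left F2 (sq_nonneg t)) h1ω.le
      have key : 0 ≤ ω * (x ⬝ᵥ (PA *ᵥ x) - 2 * t * p + t ^ 2 * σA2)
          + (1 - ω) * (t ^ 2 * σB2)
          - ω * (1 - ω) * ((x ⬝ᵥ (PtA *ᵥ x) - 2 * t * (x ⬝ᵥ (PtA *ᵥ u)) + t ^ 2 * σtA2)
              + t ^ 2 * σtB2 + 2 * t * ((x ⬝ᵥ (PtAB *ᵥ u)) - t * γt)) := by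
        nlinarith [F3, hA', hB']
      have hgoal : 1 / (1 - ω) * (x ⬝ᵥ (PA *ᵥ x) - 2 * t * p + t ^ 2 * σA2)
            + 1 / ω * (t ^ 2 * σB2) + σm2 * t ^ 2
            - (x ⬝ᵥ (PtA *ᵥ x) + (σtA2 + σtB2 - 2 * γt + σm2) * t ^ 2
              - 2 * t * (x ⬝ᵥ (PtA *ᵥ u) - x ⬝ᵥ (PtAB *ᵥ u)))
          = (ω * (x ⬝ᵥ (PA *ᵥ x) - 2 * t * p + t ^ 2 * σA2)
              + (1 - ω) * (t ^ 2 * σB2)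
              - ω * (1 - ω) * ((x ⬝ᵥ (PtA *ᵥ x) - 2 * t * (x ⬝ᵥ (PtA *ᵥ u)) + t ^ 2 * σtA2)
                  + t ^ 2 * σtB2 + 2 * t * ((x ⬝ᵥ (PtAB *ᵥ u)) - t * γt)))
            / (ω * (1 - ω)) := by
        field_simp
        ring
      rw [hgoal]
      exact div_nonneg key (mul_nonneg hω0 h1ω.le)
end

section
/- Let σ_A², σ_B², σ_m² be positive reals and r ∈ (0,1). Define the quadratic polynomials P(ω) = σ_B² + (σ_A² − σ_B² + σ_m²) ω − σ_m² ω² and Q(ω) = P(ω) − r σ_A² ω. Then there exist real numbers a, b, c, d with a < b < 0 < 1 < c < d such that P(b) = P(d) = 0 and Q(a) = Q(c) = 0. -/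
private lemma quad_root (m B C t : ℝ) (hm : 0 < m) (ht : t ^ 2 = B ^ 2 + 4 * m * C) :
    C + B * ((B + t) / (2 * m)) - m * ((B + t) / (2 * m)) ^ 2 = 0 := by
  have hm' : (2 * m) ≠ 0 := by positivity
  field_simp
  nlinarith [ht]

private lemma quad_root' (m B C t : ℝ) (hm : 0 < m) (ht : t ^ 2 = B ^ 2 + 4 * m * C) :
    C + B * ((B - t) / (2 * m)) - m * ((B - t) / (2 * m)) ^ 2 = 0 := by
  have h := quad_root m B C (-t) hm (by nlinarith)
  linear_combination h

set_option maxHeartbeats 1000000 in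
/-- Root interlacing of the quadratics `P(ω) = σ_B² + (σ_A² − σ_B² + σ_m²)ω − σ_m² ω²`
and `Q(ω) = P(ω) − r σ_A² ω`: there exist `a < b < 0 < 1 < c < d` with
`P(b) = P(d) = 0` and `Q(a) = Q(c) = 0`. -/
theorem stmt_18 (σA2 σB2 σm2 r : ℝ)
    (hA : 0 < σA2) (hB : 0 < σB2) (hm : 0 < σm2)
    (hr : r ∈ Set.Ioo (0 : ℝ) 1)
    (P Q : ℝ → ℝ)
    (hP : ∀ ω, P ω = σB2 + (σA2 - σB2 + σm2) * ω - σm2 * ω ^ 2)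
    (hQ : ∀ ω, Q ω = P ω - r * σA2 * ω) :
    ∃ a b c d : ℝ, a < b ∧ b < 0 ∧ (0 : ℝ) < 1 ∧ 1 < c ∧ c < d ∧
      P b = 0 ∧ P d = 0 ∧ Q a = 0 ∧ Q c = 0 := by
  obtain ⟨hr0, hr1⟩ := hr
  set m := σm2 with hmdef
  set B := σA2 - σB2 + σm2 with hBdef
  set C := σB2 with hCdef
  set B' := B - r * σA2 with hB'def
  clear_value m B C B'
  have hD : (0:ℝ) ≤ B ^ 2 + 4 * m * C := by positivity
  have hD' : (0:ℝ) ≤ B' ^ 2 + 4 * m * C := by positivity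
  set s := Real.sqrt (B ^ 2 + 4 * m * C) with hsdef
  set s' := Real.sqrt (B' ^ 2 + 4 * m * C) with hs'def
  clear_value s s'
  have hs2 : s ^ 2 = B ^ 2 + 4 * m * C := by rw [hsdef]; exact Real.sq_sqrt hD
  have hs'2 : s' ^ 2 = B' ^ 2 + 4 * m * C := by rw [hs'def]; exact Real.sq_sqrt hD'
  have hs0 : 0 ≤ s := by rw [hsdef]; exact Real.sqrt_nonneg _
  have hs'0 : 0 ≤ s' := by rw [hs'def]; exact Real.sqrt_nonneg _
  have hmC : 0 < 4 * m * C := by positivity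
  have hsBl : B < s := by nlinarith
  have hsBr : -B < s := by nlinarith
  have hs'Bl : B' < s' := by nlinarith
  have hs'Br : -B' < s' := by nlinarith
  have h2m : (0:ℝ) < 2 * m := by positivity
  have hrA : 0 < r * σA2 := by positivity
  refine ⟨(B' - s') / (2 * m), (B - s) / (2 * m), (B' + s') / (2 * m), (B + s) / (2 * m),
    ?_, ?_, one_pos, ?_, ?_, ?_, ?_, ?_, ?_⟩
  · -- a < b
    have key : s < r * σA2 + s' := by
      have hid : (r * σA2 + s') ^ 2 - s ^ 2 = 2 * (r * σA2) * (s' - B') := by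
        linear_combination hs'2 - hs2 + (B' + B + r * σA2) * hB'def
      have h1 : s ^ 2 < (r * σA2 + s') ^ 2 := by
        nlinarith [mul_pos hrA (show (0:ℝ) < s' - B' by linarith)]
      have h2 := lt_of_pow_lt_pow_left₀ 2 (by positivity) h1
      linarith
    have key2 : B' - s' < B - s := by rw [hB'def]; linarith
    rw [div_lt_div_iff₀ h2m h2m]
    nlinarith [mul_pos h2m (sub_pos.mpr key2)]
  · exact div_neg_of_neg_of_pos (by linarith) h2m
  · -- 1 < c
    rw [lt_div_iff₀ h2m]
    have hsq : (2 * m - B') ^ 2 < s' ^ 2 := by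
      have hQ1 : 0 < C + B' - m := by
        rw [hB'def, hBdef, hCdef, hmdef]; nlinarith
      nlinarith
    have := lt_of_pow_lt_pow_left₀ 2 hs'0 hsq
    linarith
  · -- c < d
    have key : s' < r * σA2 + s := by
      have hid : (r * σA2 + s) ^ 2 - s' ^ 2 = 2 * (r * σA2) * (s + B) := by
        linear_combination hs2 - hs'2 - (B' + B - r * σA2) * hB'def
      have h1 : s' ^ 2 < (r * σA2 + s) ^ 2 := by
        nlinarith [mul_pos hrA (show (0:ℝ) < s + B by linarith)]
      have h2 := lt_of_pow_lt_pow_left₀ 2 (by positivity) h1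
      linarith
    have key2 : B' + s' < B + s := by rw [hB'def]; linarith
    rw [div_lt_div_iff₀ h2m h2m]
    nlinarith [mul_pos h2m (sub_pos.mpr key2)]
  · -- P b = 0
    rw [hP]
    exact quad_root' m B C s hm hs2
  · rw [hP]
    exact quad_root m B C s hm hs2
  · -- Q a = 0
    rw [hQ, hP]
    have h := quad_root' m B' C s' hm hs'2
    linear_combination h - ((B' - s') / (2 * m)) * hB'def
  · rw [hQ, hP]
    have h := quad_root m B' C s' hm hs'2
    linear_combination h - ((B' + s') / (2 * m)) * hB'def
end
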